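/- arXiv:1011.6018 — 2 statements merged into one kernel-verified Lean document; each statement's English description precedes it below -/
import Mathlib

section
/- For every natural number n and every complex number x, the identity ∑_{k=0}^{n} C(n,k) · C(n+k,k) · (-1)^{n-k} · (1+x)^k = ∑_{k=0}^{n} C(n,k) · C(n+k,k) · x^k holds, where C(a,b) denotes the ordinary binomial coefficient. -/
open Finset

/-- Alternating binomial difference identity:
`∑_{i=0}^m (-1)^i C(m,i) C(a+i,b) = (-1)^m C(a, b-m)` for `m ≤ b`. -/
lemma simons_aux_A (m : ℕ) : ∀ a b : ℕ, m ≤ b →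
    ∑ i ∈ range (m + 1), (-1 : ℂ) ^ i * (m.choose i : ℂ) * ((a + i).choose b : ℂ)
      = (-1 : ℂ) ^ m * (a.choose (b - m) : ℂ) := by
  induction m with
  | zero => intro a b _; simp
  | succ m ih =>
    intro a b hb
    have hmb : m ≤ b := Nat.le_of_succ_le hb
    -- T : partial sum relation
    have hA : ∑ i ∈ range (m + 1), (-1 : ℂ) ^ i * (m.choose i : ℂ) * ((a + i).choose b : ℂ)
        = (-1 : ℂ) ^ m * (a.choose (b - m) : ℂ) := ih a b hmb
    have hA' : ∑ i ∈ range (m + 1), (-1 : ℂ) ^ i * (m.choose i : ℂ) * (((a+1) + i).choose b : ℂ)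
        = (-1 : ℂ) ^ m * ((a+1).choose (b - m) : ℂ) := ih (a+1) b hmb
    have key : ∑ i ∈ range (m + 2), (-1 : ℂ) ^ i * ((m+1).choose i : ℂ) * ((a + i).choose b : ℂ)
        = (a.choose b : ℂ)
          - (∑ i ∈ range (m + 1), (-1 : ℂ) ^ i * (m.choose i : ℂ) * (((a+1) + i).choose b : ℂ))
          - (∑ i ∈ range (m + 1), (-1 : ℂ) ^ i * (m.choose (i+1) : ℂ) * (((a+1) + i).choose b : ℂ)) := by
      rw [Finset.sum_range_succ' (fun i => (-1 : ℂ) ^ i * ((m+1).choose i : ℂ) * ((a + i).choose b : ℂ)) (m+1)]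
      have : ∀ i, (-1 : ℂ) ^ (i+1) * ((m+1).choose (i+1) : ℂ) * ((a + (i+1)).choose b : ℂ)
          = -((-1 : ℂ) ^ i * (m.choose i : ℂ) * (((a+1) + i).choose b : ℂ))
            - ((-1 : ℂ) ^ i * (m.choose (i+1) : ℂ) * (((a+1) + i).choose b : ℂ)) := by
        intro i
        have h1 : (m+1).choose (i+1) = m.choose i + m.choose (i+1) := Nat.choose_succ_succ' m i
        have h2 : a + (i + 1) = (a + 1) + i := by ring
        rw [h1, h2]
        push_cast
        ring
      rw [Finset.sum_congr rfl (fun i _ => this i), Finset.sum_sub_distrib,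
        Finset.sum_neg_distrib]
      simp
      ring
    -- relate the last sum to hA
    have hT : ∑ i ∈ range (m + 1), (-1 : ℂ) ^ i * (m.choose (i+1) : ℂ) * (((a+1) + i).choose b : ℂ)
        = (a.choose b : ℂ) - (-1 : ℂ) ^ m * (a.choose (b - m) : ℂ) := by
      have expand : ∑ i ∈ range (m + 1), (-1 : ℂ) ^ i * (m.choose i : ℂ) * ((a + i).choose b : ℂ)
          = (a.choose b : ℂ)
            - ∑ i ∈ range m, (-1 : ℂ) ^ i * (m.choose (i+1) : ℂ) * (((a+1) + i).choose b : ℂ) := by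
        rw [Finset.sum_range_succ' (fun i => (-1 : ℂ) ^ i * (m.choose i : ℂ) * ((a + i).choose b : ℂ)) m]
        have : ∀ i, (-1 : ℂ) ^ (i+1) * (m.choose (i+1) : ℂ) * ((a + (i+1)).choose b : ℂ)
            = -((-1 : ℂ) ^ i * (m.choose (i+1) : ℂ) * (((a+1) + i).choose b : ℂ)) := by
          intro i
          have h2 : a + (i + 1) = (a + 1) + i := by ring
          rw [h2]; ring
        rw [Finset.sum_congr rfl (fun i _ => this i), Finset.sum_neg_distrib]
        simp
        ring
      have top : ∑ i ∈ range (m + 1), (-1 : ℂ) ^ i * (m.choose (i+1) : ℂ) * (((a+1) + i).choose b : ℂ)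
          = ∑ i ∈ range m, (-1 : ℂ) ^ i * (m.choose (i+1) : ℂ) * (((a+1) + i).choose b : ℂ) := by
        rw [Finset.sum_range_succ]
        simp [Nat.choose_succ_self]
      rw [top]
      have := expand.symm.trans hA
      linear_combination -this
    rw [key, hA', hT]
    -- Pascal : (a+1).choose (b-m) = a.choose (b-m-1) + a.choose (b-m)
    have hbm : b - m = (b - (m+1)) + 1 := by omega
    have pascal : (a+1).choose (b - m) = a.choose (b - (m+1)) + a.choose (b - m) := by
      rw [hbm, Nat.choose_succ_succ']
    rw [pascal]
    push_cast
    ring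

/-- Inner sum identity:
`∑_{k=0}^n (-1)^{n-k} C(n,k) C(n+k,k) C(k,j) = C(n,j) C(n+j,j)` for `j ≤ n`. -/
lemma simons_aux_B (n j : ℕ) (hj : j ≤ n) :
    ∑ k ∈ range (n + 1),
        (n.choose k : ℂ) * ((n + k).choose k : ℂ) * (-1 : ℂ) ^ (n - k) * (k.choose j : ℂ)
      = (n.choose j : ℂ) * ((n + j).choose j : ℂ) := by
  -- split off the vanishing part k < j
  have split : range (n + 1) = Finset.Ico 0 j ∪ Finset.Ico j (n+1) := by
    rw [Finset.range_eq_Ico, ← Finset.Ico_union_Ico_eq_Ico (Nat.zero_le j) (by omega)]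
  rw [split, Finset.sum_union (by
    apply Finset.Ico_disjoint_Ico_consecutive)]
  have h0 : ∑ k ∈ Finset.Ico 0 j,
      (n.choose k : ℂ) * ((n + k).choose k : ℂ) * (-1 : ℂ) ^ (n - k) * (k.choose j : ℂ) = 0 := by
    apply Finset.sum_eq_zero
    intro k hk
    rw [Finset.mem_Ico] at hk
    rw [Nat.choose_eq_zero_of_lt hk.2]
    simp
  rw [h0, zero_add]
  rw [Finset.sum_Ico_eq_sum_range]
  have hlen : n + 1 - j = (n - j) + 1 := by omega
  rw [hlen]
  have term : ∀ i ∈ range ((n - j) + 1),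
      (n.choose (j + i) : ℂ) * ((n + (j + i)).choose (j + i) : ℂ) * (-1 : ℂ) ^ (n - (j + i))
          * ((j + i).choose j : ℂ)
      = ((n.choose j : ℂ) * (-1 : ℂ) ^ (n - j)) *
        ((-1 : ℂ) ^ i * ((n - j).choose i : ℂ) * (((n + j) + i).choose n : ℂ)) := by
    intro i hi
    rw [Finset.mem_range] at hi
    have hi' : i ≤ n - j := by omega
    have hjin : j + i ≤ n := by omega
    -- C(n, j+i) C(j+i, j) = C(n,j) C(n-j, i)
    have hc1 : (n.choose (j+i)) * ((j+i).choose j) = n.choose j * (n - j).choose i := by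
      have := Nat.choose_mul (n := n) (k := j + i) (s := j) (Nat.le_add_right j i)
      simpa using this
    -- C(n+(j+i), j+i) = C((n+j)+i, n)
    have hc2 : (n + (j + i)).choose (j + i) = ((n + j) + i).choose n := by
      have h : n + (j + i) = (j + i) + n := by ring
      rw [h, Nat.choose_symm_add, ← h]
      congr 1
      omega
    -- sign : (-1)^(n-(j+i)) = (-1)^(n-j) * (-1)^i
    have hsign : (-1 : ℂ) ^ (n - (j + i)) = (-1 : ℂ) ^ (n - j) * (-1 : ℂ) ^ i := by
      have h : (n - j) = (n - (j + i)) + i := by omega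
      have hsq : (-1 : ℂ) ^ i * (-1 : ℂ) ^ i = 1 := by
        rw [← pow_add, ← two_mul, pow_mul, neg_one_sq, one_pow]
      rw [h, pow_add, mul_assoc, hsq, mul_one]
    rw [hc2, hsign]
    have hc1' : (n.choose (j+i) : ℂ) * ((j+i).choose j : ℂ)
        = (n.choose j : ℂ) * ((n - j).choose i : ℂ) := by
      exact_mod_cast congrArg (Nat.cast : ℕ → ℂ) hc1
    calc (n.choose (j + i) : ℂ) * (((n + j) + i).choose n : ℂ) * ((-1 : ℂ) ^ (n - j) * (-1 : ℂ) ^ i)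
          * ((j + i).choose j : ℂ)
        = ((n.choose (j+i) : ℂ) * ((j+i).choose j : ℂ)) * (((n + j) + i).choose n : ℂ)
            * ((-1 : ℂ) ^ (n - j) * (-1 : ℂ) ^ i) := by ring
      _ = ((n.choose j : ℂ) * ((n - j).choose i : ℂ)) * (((n + j) + i).choose n : ℂ)
            * ((-1 : ℂ) ^ (n - j) * (-1 : ℂ) ^ i) := by rw [hc1']
      _ = ((n.choose j : ℂ) * (-1 : ℂ) ^ (n - j)) *
          ((-1 : ℂ) ^ i * ((n - j).choose i : ℂ) * (((n + j) + i).choose n : ℂ)) := by ring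
  rw [Finset.sum_congr rfl term, ← Finset.mul_sum]
  rw [simons_aux_A (n - j) (n + j) n (Nat.sub_le n j)]
  have h1 : n - (n - j) = j := by omega
  rw [h1]
  have h2 : (-1 : ℂ) ^ (n - j) * ((-1 : ℂ) ^ (n - j) * ((n + j).choose j : ℂ))
      = ((n + j).choose j : ℂ) := by
    rw [← mul_assoc, ← pow_add, ← two_mul, pow_mul, neg_one_sq, one_pow, one_mul]
  calc (n.choose j : ℂ) * (-1:ℂ)^(n-j) * ((-1:ℂ)^(n-j) * ((n + j).choose j : ℂ))
      = (n.choose j : ℂ) * ((-1:ℂ)^(n-j) * ((-1:ℂ)^(n-j) * ((n + j).choose j : ℂ))) := by ring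
    _ = (n.choose j : ℂ) * ((n + j).choose j : ℂ) := by rw [h2]

/-- Simons' identity: for every natural number `n` and complex number `x`,
`∑_{k=0}^n C(n,k) C(n+k,k) (-1)^(n-k) (1+x)^k = ∑_{k=0}^n C(n,k) C(n+k,k) x^k`. -/
theorem simons_identity (n : ℕ) (x : ℂ) :
    ∑ k ∈ Finset.range (n + 1),
        (n.choose k : ℂ) * ((n + k).choose k : ℂ) * (-1 : ℂ) ^ (n - k) * (1 + x) ^ k
      = ∑ k ∈ Finset.range (n + 1),
        (n.choose k : ℂ) * ((n + k).choose k : ℂ) * x ^ k := by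
  have expand : ∀ k ∈ range (n+1),
      (n.choose k : ℂ) * ((n + k).choose k : ℂ) * (-1 : ℂ) ^ (n - k) * (1 + x) ^ k
      = ∑ j ∈ range (n+1),
          (n.choose k : ℂ) * ((n + k).choose k : ℂ) * (-1 : ℂ) ^ (n - k) * ((k.choose j : ℂ) * x ^ j) := by
    intro k hk
    rw [Finset.mem_range] at hk
    have hpow : (1 + x) ^ k = ∑ j ∈ range (k+1), x ^ j * (k.choose j : ℂ) := by
      rw [add_comm 1 x, add_pow]
      apply Finset.sum_congr rfl
      intro j _
      simp
    have hext : ∑ j ∈ range (k+1), x ^ j * (k.choose j : ℂ)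
        = ∑ j ∈ range (n+1), x ^ j * (k.choose j : ℂ) := by
      apply Finset.sum_subset
      · exact Finset.range_subset_range.2 (by omega)
      · intro j _ hj
        rw [Finset.mem_range] at hj
        rw [Nat.choose_eq_zero_of_lt (by omega)]
        simp
    rw [hpow, hext, Finset.mul_sum]
    apply Finset.sum_congr rfl
    intro j _
    ring
  rw [Finset.sum_congr rfl expand, Finset.sum_comm]
  apply Finset.sum_congr rfl
  intro j hj
  rw [Finset.mem_range] at hj
  have : ∑ k ∈ range (n+1),
      (n.choose k : ℂ) * ((n + k).choose k : ℂ) * (-1 : ℂ) ^ (n - k) * ((k.choose j : ℂ) * x ^ j)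
      = (∑ k ∈ range (n+1),
          (n.choose k : ℂ) * ((n + k).choose k : ℂ) * (-1 : ℂ) ^ (n - k) * (k.choose j : ℂ)) * x ^ j := by
    rw [Finset.sum_mul]
    apply Finset.sum_congr rfl
    intro k _
    ring
  rw [this, simons_aux_B n j (by omega)]
end

section
/- For every natural number n and all complex numbers α, β, x, y, the identity ∑_{k=0}^{n} C(β−α+n, n−k) · C(β+k, k) · (−1)^{n−k} · (x+y)^k · y^{n−k} = ∑_{k=0}^{n} C(α, n−k) · C(β+k, k) · x^k · y^{n−k} holds, where C(z, j) for a complex number z and a natural number j denotes the generalized binomial coefficient z(z−1)⋯(z−j+1)/j!. -/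
open Finset

/-- The generalized binomial coefficient `C(z, j) = z(z-1)⋯(z-j+1)/j!` for a complex
number `z` and a natural number `j`, with `C(z, 0) = 1`. -/
noncomputable def cbinom (z : ℂ) (j : ℕ) : ℂ :=
  (∏ i ∈ Finset.range j, (z - (i : ℂ))) / (j.factorial : ℂ)

lemma descPoch_smeval (z : ℂ) (k : ℕ) :
    (descPochhammer ℤ k).smeval z = ∏ i ∈ Finset.range k, (z - (i : ℂ)) := by
  induction k with
  | zero => simp [descPochhammer_zero]
  | succ k ih =>
      rw [descPochhammer_succ_right, Polynomial.smeval_mul, ih, prod_range_succ]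
      congr 1
      simp [Polynomial.smeval_sub, Polynomial.smeval_X, Polynomial.smeval_natCast]

lemma cbinom_eq_choose (z : ℂ) (k : ℕ) : cbinom z k = Ring.choose z k := by
  have h := Ring.descPochhammer_eq_factorial_smul_choose z k
  rw [descPoch_smeval] at h
  have hf : (k.factorial : ℂ) ≠ 0 := by exact_mod_cast k.factorial_ne_zero
  rw [cbinom, h, nsmul_eq_mul]
  field_simp

lemma cbinom_reflect (z : ℂ) (N : ℕ) :
    cbinom ((N : ℂ) - 1 - z) N = (-1 : ℂ) ^ N * cbinom z N := by
  unfold cbinom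
  rw [mul_div_assoc']
  congr 1
  rw [show ((-1 : ℂ)) ^ N = ∏ _i ∈ Finset.range N, (-1 : ℂ) by simp, ← prod_mul_distrib]
  rw [← Finset.prod_range_reflect (fun i => ((N : ℂ) - 1 - z - (i : ℂ))) N]
  apply Finset.prod_congr rfl
  intro i hi
  rw [mem_range] at hi
  have h1 : 1 ≤ N := by omega
  have : ((N - 1 - i : ℕ) : ℂ) = (N : ℂ) - 1 - (i : ℂ) := by
    push_cast [Nat.cast_sub (by omega : i ≤ N - 1), Nat.cast_sub h1]
    ring
  rw [this]
  ring

lemma cbinom_trinomial (z : ℂ) {j k : ℕ} (hjk : j ≤ k) :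
    cbinom z k * (k.choose j : ℂ) = cbinom z j * cbinom (z - (j : ℂ)) (k - j) := by
  have hk : (k.factorial : ℂ) ≠ 0 := by exact_mod_cast k.factorial_ne_zero
  have hj : (j.factorial : ℂ) ≠ 0 := by exact_mod_cast j.factorial_ne_zero
  have hkj : ((k - j).factorial : ℂ) ≠ 0 := by exact_mod_cast (k - j).factorial_ne_zero
  have hsplit : (∏ i ∈ Finset.range k, (z - (i : ℂ)))
      = (∏ i ∈ Finset.range j, (z - (i : ℂ))) *
        ∏ i ∈ Finset.range (k - j), (z - (j : ℂ) - (i : ℂ)) := by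
    have h2 : k = j + (k - j) := by omega
    rw [h2, Finset.prod_range_add (fun i => (z - (i : ℂ))) j (k - j)]
    simp only [Nat.add_sub_cancel_left]
    congr 1
    apply Finset.prod_congr rfl
    intro i _
    push_cast
    ring
  have hfac : (k.factorial : ℂ) = (k.choose j : ℂ) * (j.factorial : ℂ) * ((k - j).factorial : ℂ) := by
    rw [← Nat.choose_mul_factorial_mul_factorial hjk]
    push_cast
    ring
  unfold cbinom
  rw [hsplit, hfac]
  have hc : (k.choose j : ℂ) ≠ 0 := by
    exact_mod_cast (Nat.choose_pos hjk).ne'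
  field_simp

lemma cbinom_vandermonde (z w : ℂ) (N : ℕ) :
    cbinom (z + w) N = ∑ m ∈ Finset.range (N + 1), cbinom z m * cbinom w (N - m) := by
  rw [cbinom_eq_choose, Ring.add_choose_eq N (Commute.all z w),
    Finset.Nat.sum_antidiagonal_eq_sum_range_succ (fun a b => Ring.choose z a * Ring.choose w b)]
  simp [cbinom_eq_choose]

lemma key (n j : ℕ) (hj : j ≤ n) (α β : ℂ) :
    ∑ k ∈ Finset.Ico j (n+1),
      cbinom (β - α + (n:ℂ)) (n - k) * cbinom (β + (k:ℂ)) k * (-1:ℂ)^(n-k) * (k.choose j : ℂ)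
      = cbinom α (n - j) * cbinom (β + (j:ℂ)) j := by
  have step : ∀ k ∈ Finset.Ico j (n+1),
      cbinom (β - α + (n:ℂ)) (n - k) * cbinom (β + (k:ℂ)) k * (-1:ℂ)^(n-k) * (k.choose j : ℂ)
      = ((-1:ℂ)^(n+j) * cbinom (β + (j:ℂ)) j) *
        (cbinom (-β - 1 - (j:ℂ)) (k - j) * cbinom (β - α + (n:ℂ)) (n - k)) := by
    intro k hk
    rw [Finset.mem_Ico] at hk
    obtain ⟨hjk, hkn⟩ := hk
    have h1 : cbinom (β + (k:ℂ)) k = (-1:ℂ)^k * cbinom (-β - 1) k := by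
      have h := cbinom_reflect (-β - 1) k
      rw [show (k:ℂ) - 1 - (-β - 1) = β + k by ring] at h
      exact h
    have h2 := cbinom_trinomial (-β - 1) hjk
    have h3 : cbinom (-β - 1) j = (-1:ℂ)^j * cbinom (β + (j:ℂ)) j := by
      have h := cbinom_reflect (β + (j:ℂ)) j
      rw [show (j:ℂ) - 1 - (β + j) = -β - 1 by ring] at h
      exact h.symm ▸ rfl
    have h4 : (-1:ℂ)^(n-k) * (-1:ℂ)^k = (-1:ℂ)^n := by
      rw [← pow_add]; congr 1; omega
    calc cbinom (β - α + (n:ℂ)) (n - k) * cbinom (β + (k:ℂ)) k * (-1:ℂ)^(n-k) * (k.choose j : ℂ)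
        = (-1:ℂ)^(n-k) * (-1:ℂ)^k * (cbinom (-β - 1) k * (k.choose j : ℂ))
            * cbinom (β - α + (n:ℂ)) (n - k) := by rw [h1]; ring
      _ = (-1:ℂ)^n * (cbinom (-β - 1) j * cbinom (-β - 1 - (j:ℂ)) (k - j))
            * cbinom (β - α + (n:ℂ)) (n - k) := by rw [h2, h4]
      _ = (-1:ℂ)^n * (-1:ℂ)^j * cbinom (β + (j:ℂ)) j * cbinom (-β - 1 - (j:ℂ)) (k - j)
            * cbinom (β - α + (n:ℂ)) (n - k) := by rw [h3]; ring
      _ = ((-1:ℂ)^(n+j) * cbinom (β + (j:ℂ)) j) *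
          (cbinom (-β - 1 - (j:ℂ)) (k - j) * cbinom (β - α + (n:ℂ)) (n - k)) := by
            rw [pow_add]; ring
  rw [Finset.sum_congr rfl step, ← Finset.mul_sum, Finset.sum_Ico_eq_sum_range]
  have hrange : n + 1 - j = (n - j) + 1 := by omega
  rw [hrange]
  have hsum : ∑ m ∈ Finset.range ((n - j) + 1),
      cbinom (-β - 1 - (j:ℂ)) (j + m - j) * cbinom (β - α + (n:ℂ)) (n - (j + m))
      = cbinom ((-β - 1 - (j:ℂ)) + (β - α + (n:ℂ))) (n - j) := by
    rw [cbinom_vandermonde]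
    apply Finset.sum_congr rfl
    intro m hm
    rw [Finset.mem_range] at hm
    congr 2 <;> omega
  rw [hsum, show (-β - 1 - (j:ℂ)) + (β - α + (n:ℂ)) = ((n - j : ℕ):ℂ) - 1 - α by
      push_cast [Nat.cast_sub hj]; ring,
    cbinom_reflect α (n - j)]
  have heven : Even (n + j + (n - j)) := ⟨n, by omega⟩
  have hs : (-1:ℂ)^(n+j) * (-1:ℂ)^(n-j) = 1 := by rw [← pow_add]; exact heven.neg_one_pow
  linear_combination cbinom (β + (j:ℂ)) j * cbinom α (n - j) * hs

/-- Munarini's identity. -/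
theorem munarini_identity (n : ℕ) (α β x y : ℂ) :
    ∑ k ∈ Finset.range (n + 1),
        cbinom (β - α + (n : ℂ)) (n - k) * cbinom (β + (k : ℂ)) k *
          (-1 : ℂ) ^ (n - k) * (x + y) ^ k * y ^ (n - k)
      = ∑ k ∈ Finset.range (n + 1),
        cbinom α (n - k) * cbinom (β + (k : ℂ)) k * x ^ k * y ^ (n - k) := by
  calc
    ∑ k ∈ Finset.range (n + 1),
        cbinom (β - α + (n : ℂ)) (n - k) * cbinom (β + (k : ℂ)) k *
          (-1 : ℂ) ^ (n - k) * (x + y) ^ k * y ^ (n - k)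
      = ∑ k ∈ Finset.Ico 0 (n + 1), ∑ j ∈ Finset.Ico 0 (k + 1),
          cbinom (β - α + (n : ℂ)) (n - k) * cbinom (β + (k : ℂ)) k *
            (-1 : ℂ) ^ (n - k) * (k.choose j : ℂ) * (x ^ j * (y ^ (k - j) * y ^ (n - k))) := by
        rw [Finset.range_eq_Ico]
        apply Finset.sum_congr rfl
        intro k _
        rw [add_pow, Finset.mul_sum, Finset.sum_mul, Finset.range_eq_Ico]
        apply Finset.sum_congr rfl
        intro j _
        ring
    _ = ∑ j ∈ Finset.Ico 0 (n + 1), ∑ k ∈ Finset.Ico j (n + 1),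
          cbinom (β - α + (n : ℂ)) (n - k) * cbinom (β + (k : ℂ)) k *
            (-1 : ℂ) ^ (n - k) * (k.choose j : ℂ) * (x ^ j * (y ^ (k - j) * y ^ (n - k))) :=
        (Finset.sum_Ico_Ico_comm 0 (n + 1) fun j k =>
          cbinom (β - α + (n : ℂ)) (n - k) * cbinom (β + (k : ℂ)) k *
            (-1 : ℂ) ^ (n - k) * (k.choose j : ℂ) * (x ^ j * (y ^ (k - j) * y ^ (n - k)))).symm
    _ = ∑ j ∈ Finset.Ico 0 (n + 1),
          cbinom α (n - j) * cbinom (β + (j : ℂ)) j * x ^ j * y ^ (n - j) := by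
        apply Finset.sum_congr rfl
        intro j hj
        rw [Finset.mem_Ico] at hj
        have hjn : j ≤ n := by omega
        have hinner : ∑ k ∈ Finset.Ico j (n + 1),
            cbinom (β - α + (n : ℂ)) (n - k) * cbinom (β + (k : ℂ)) k *
              (-1 : ℂ) ^ (n - k) * (k.choose j : ℂ) * (x ^ j * (y ^ (k - j) * y ^ (n - k)))
            = (∑ k ∈ Finset.Ico j (n + 1),
                cbinom (β - α + (n : ℂ)) (n - k) * cbinom (β + (k : ℂ)) k *
                  (-1 : ℂ) ^ (n - k) * (k.choose j : ℂ)) * (x ^ j * y ^ (n - j)) := by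
          rw [Finset.sum_mul]
          apply Finset.sum_congr rfl
          intro k hk
          rw [Finset.mem_Ico] at hk
          rw [show y ^ (k - j) * y ^ (n - k) = y ^ (n - j) by rw [← pow_add]; congr 1; omega]
        rw [hinner, key n j hjn α β]
        ring
    _ = ∑ k ∈ Finset.range (n + 1),
          cbinom α (n - k) * cbinom (β + (k : ℂ)) k * x ^ k * y ^ (n - k) := by
        rw [Finset.range_eq_Ico]
end
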